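/- For every integer r ≥ 2, every cycle of the triangular grid graph T_r that contains both of the vertices (0,r,0) and (0,0,r) has length at least 2r + 1, and there exists such a cycle of length exactly 2r + 1. -/

import Mathlib

/-- Vertices of the triangular grid graph `T_r`: triples of nonnegative integers summing to `r`. -/
abbrev TriVert (r : ℕ) := {p : ℕ × ℕ × ℕ // p.1 + p.2.1 + p.2.2 = r}

/-- The triangular grid graph `T_r`: two triples are adjacent iff the sum of the absolute
differences of their coordinates equals `2`. -/
def triGrid (r : ℕ) : SimpleGraph (TriVert r) where
  Adj p q :=
    |((p.1.1 : ℤ)) - (q.1.1 : ℤ)| + |((p.1.2.1 : ℤ)) - (q.1.2.1 : ℤ)|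
      + |((p.1.2.2 : ℤ)) - (q.1.2.2 : ℤ)| = 2
  symm := by
    constructor
    intro p q h
    rw [abs_sub_comm ((q.1.1 : ℤ)), abs_sub_comm ((q.1.2.1 : ℤ)), abs_sub_comm ((q.1.2.2 : ℤ))]
    exact h
  loopless := by
    constructor
    intro p h
    simp at h

namespace TriAux

open SimpleGraph Walk

/-- Constructor for vertices. -/
def mkV (r i j k : ℕ) (h : i + j + k = r) : TriVert r := ⟨(i, j, k), h⟩

@[simp] lemma mkV_i (r i j k h) : (mkV r i j k h).1.1 = i := rfl
@[simp] lemma mkV_j (r i j k h) : (mkV r i j k h).1.2.1 = j := rfl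
@[simp] lemma mkV_k (r i j k h) : (mkV r i j k h).1.2.2 = k := rfl

lemma adj_iff' {r : ℕ} (p q : TriVert r) : (triGrid r).Adj p q ↔
    ((p.1.1 : ℤ) - q.1.1).natAbs + ((p.1.2.1 : ℤ) - q.1.2.1).natAbs
      + ((p.1.2.2 : ℤ) - q.1.2.2).natAbs = 2 := by
  simp only [triGrid, Int.abs_eq_natAbs]
  omega

lemma len_lb {r : ℕ} : ∀ {x y : TriVert r} (p : (triGrid r).Walk x y),
    ((x.1.2.1 : ℤ) - y.1.2.1).natAbs ≤ p.length := by
  intro x y p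
  induction p with
  | nil => simp
  | @cons x w y h q ih =>
    have hadj := (adj_iff' x w).mp h
    have hx := x.2
    have hw := w.2
    rw [Walk.length_cons]
    omega

/-- On a walk realizing the exact `j`-distance, the first coordinate is monotone and
every intermediate `j`-value is visited. -/
lemma forced {r : ℕ} : ∀ {x y : TriVert r} (p : (triGrid r).Walk x y),
    ((p.length : ℤ) = (x.1.2.1 : ℤ) - y.1.2.1) →
    ((∀ v ∈ p.support, x.1.1 ≤ v.1.1 ∧ v.1.1 ≤ y.1.1) ∧
      (∀ t : ℕ, y.1.2.1 ≤ t → t ≤ x.1.2.1 → ∃ v ∈ p.support, v.1.2.1 = t)) := by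
  intro x y p
  induction p with
  | nil =>
    rename_i z
    intro _
    constructor
    · intro v hv
      rw [Walk.support_nil, List.mem_singleton] at hv
      subst hv
      exact ⟨le_refl _, le_refl _⟩
    · intro t h1 h2
      exact ⟨z, by simp, by omega⟩
  | @cons x w y h q ih =>
    intro hlen
    have hadj := (adj_iff' x w).mp h
    have hx := x.2
    have hw := w.2
    have hy := y.2
    have hb := len_lb q
    rw [Walk.length_cons] at hlen
    push_cast at hlen
    -- derive the step structure
    have hwj : (w.1.2.1 : ℤ) = (x.1.2.1 : ℤ) - 1 := by omega
    have hwi : x.1.1 ≤ w.1.1 := by omega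
    have hq : ((q.length : ℤ) = (w.1.2.1 : ℤ) - y.1.2.1) := by omega
    obtain ⟨ih1, ih2⟩ := ih hq
    have hwy : w.1.1 ≤ y.1.1 := (ih1 w q.start_mem_support).2
    constructor
    · intro v hv
      rw [Walk.support_cons, List.mem_cons] at hv
      rcases hv with rfl | hv
      · exact ⟨le_refl _, le_trans hwi hwy⟩
      · obtain ⟨h1, h2⟩ := ih1 v hv
        exact ⟨le_trans hwi h1, h2⟩
    · intro t h1 h2
      by_cases ht : t ≤ w.1.2.1
      · obtain ⟨v, hv, hvt⟩ := ih2 t (by omega) ht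
        exact ⟨v, by rw [Walk.support_cons]; exact List.mem_cons_of_mem _ hv, hvt⟩
      · refine ⟨x, by simp, by omega⟩

/-- A walk of length exactly `r` from `(0,r,0)` to `(0,0,r)` passes through `(0,r-1,1)`. -/
lemma mem_mid {r : ℕ} (hr : 2 ≤ r)
    (p : (triGrid r).Walk (mkV r 0 r 0 (by omega)) (mkV r 0 0 r (by omega)))
    (hlen : p.length = r) :
    mkV r 0 (r-1) 1 (by omega) ∈ p.support := by
  obtain ⟨h1, h2⟩ := forced p (by simp [hlen])
  obtain ⟨v, hv, hvt⟩ := h2 (r - 1) (by simp) (by simp)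
  obtain ⟨hvl, hvr⟩ := h1 v hv
  simp only [mkV_i] at hvl hvr
  have hv2 := v.2
  have : v = mkV r 0 (r-1) 1 (by omega) := by
    obtain ⟨⟨a, b, c⟩, hs⟩ := v
    simp only [mkV, Subtype.mk.injEq, Prod.mk.injEq]
    simp only at hvl hvr hvt hv2
    omega
  rwa [this] at hv

/-- The spine walk from `(0,t,r-t)` down to `(0,0,r)`. -/
def spine (r : ℕ) : (t : ℕ) → (ht : t ≤ r) →
    (triGrid r).Walk (mkV r 0 t (r - t) (by omega)) (mkV r 0 0 r (by omega))
  | 0, _ => Walk.nil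
  | t+1, h => Walk.cons
      (by rw [adj_iff']; simp only [mkV_i, mkV_j, mkV_k]; omega)
      (spine r t (by omega))

lemma spine_length {r : ℕ} : ∀ (t : ℕ) (h : t ≤ r), (spine r t h).length = t := by
  intro t
  induction t with
  | zero => intro h; rfl
  | succ t ih => intro h; rw [spine, Walk.length_cons, ih]

lemma spine_support {r : ℕ} : ∀ (t : ℕ) (h : t ≤ r) (v : TriVert r),
    v ∈ (spine r t h).support → v.1.1 = 0 ∧ v.1.2.1 ≤ t := by
  intro t
  induction t with
  | zero =>
    intro h v hv
    rw [spine, Walk.support_nil, List.mem_singleton] at hv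
    subst hv; simp
  | succ t ih =>
    intro h v hv
    rw [spine, Walk.support_cons, List.mem_cons] at hv
    rcases hv with rfl | hv
    · simp
    · obtain ⟨h1, h2⟩ := ih (by omega) v hv
      exact ⟨h1, by omega⟩

lemma spine_nodup {r : ℕ} : ∀ (t : ℕ) (h : t ≤ r), (spine r t h).support.Nodup := by
  intro t
  induction t with
  | zero => intro h; rw [spine, Walk.support_nil]; simp
  | succ t ih =>
    intro h
    rw [spine, Walk.support_cons]
    refine List.nodup_cons.mpr ⟨?_, ih (by omega)⟩
    intro hmem
    have := (spine_support t (by omega) _ hmem).2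
    simp at this

/-- The return walk: from `(1, r-1-d, d)` up along the `i = 1` line to `(1,r-1,0)`, then
to `(0,r,0)`. -/
def back (r : ℕ) : (d : ℕ) → (hd : d ≤ r - 1) → (h1 : 1 ≤ r) →
    (triGrid r).Walk (mkV r 1 (r - 1 - d) d (by omega)) (mkV r 0 r 0 (by omega))
  | 0, _, h1 => Walk.cons
      (by rw [adj_iff']; simp only [mkV_i, mkV_j, mkV_k]; omega)
      Walk.nil
  | d+1, h, h1 => Walk.cons
      (by rw [adj_iff']; simp only [mkV_i, mkV_j, mkV_k]; omega)
      (back r d (by omega) h1)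

lemma back_length {r : ℕ} : ∀ (d : ℕ) (h : d ≤ r - 1) (h1 : 1 ≤ r),
    (back r d h h1).length = d + 1 := by
  intro d
  induction d with
  | zero => intro h h1; rfl
  | succ d ih => intro h h1; rw [back, Walk.length_cons, ih]

lemma back_support {r : ℕ} : ∀ (d : ℕ) (h : d ≤ r - 1) (h1 : 1 ≤ r) (v : TriVert r),
    v ∈ (back r d h h1).support →
      (v.1.1 = 1 ∧ v.1.2.2 ≤ d) ∨ v = mkV r 0 r 0 (by omega) := by
  intro d
  induction d with
  | zero =>
    intro h h1 v hv
    rw [back, Walk.support_cons, Walk.support_nil, List.mem_cons, List.mem_singleton] at hv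
    rcases hv with rfl | rfl
    · exact Or.inl ⟨rfl, le_refl _⟩
    · exact Or.inr rfl
  | succ d ih =>
    intro h h1 v hv
    rw [back, Walk.support_cons, List.mem_cons] at hv
    rcases hv with rfl | hv
    · exact Or.inl ⟨rfl, le_refl _⟩
    · rcases ih (by omega) h1 v hv with ⟨ha, hb⟩ | hc
      · exact Or.inl ⟨ha, by omega⟩
      · exact Or.inr hc

lemma back_nodup {r : ℕ} : ∀ (d : ℕ) (h : d ≤ r - 1) (h1 : 1 ≤ r),
    (back r d h h1).support.Nodup := by
  intro d
  induction d with
  | zero =>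
    intro h h1
    rw [back, Walk.support_cons, Walk.support_nil]
    refine List.nodup_cons.mpr ⟨?_, List.nodup_singleton _⟩
    rw [List.mem_singleton]
    intro hmem
    have : (1 : ℕ) = 0 := congrArg (fun v : TriVert r => v.1.1) hmem
    omega
  | succ d ih =>
    intro h h1
    rw [back, Walk.support_cons]
    refine List.nodup_cons.mpr ⟨?_, ih (by omega) h1⟩
    intro hmem
    rcases back_support d (by omega) h1 _ hmem with ⟨_, hb⟩ | hc
    · simp at hb
    · have : (1 : ℕ) = 0 := congrArg (fun v : TriVert r => v.1.1) hc
      omega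

lemma mem_tail_of_closed {α : Type*} {G : SimpleGraph α} {a x : α} (c : G.Walk a a)
    (hn : ¬ c.Nil) (h : x ∈ c.support) : x ∈ c.support.tail := by
  cases c with
  | nil => simp at hn
  | cons hadj q =>
    rw [Walk.support_cons, List.tail_cons]
    rw [Walk.support_cons, List.mem_cons] at h
    rcases h with rfl | h
    · exact q.end_mem_support
    · exact h

end TriAux

open SimpleGraph Walk TriAux

set_option maxHeartbeats 1600000 in
/-- For every integer `r ≥ 2`, every cycle of the triangular grid graph `T_r` containing both
vertices `(0, r, 0)` and `(0, 0, r)` has length at least `2r + 1`, and there exists such a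
cycle of length exactly `2r + 1`. -/
theorem triGrid_cycle_through_corners (r : ℕ) (hr : 2 ≤ r) :
    (∀ (a : TriVert r) (c : (triGrid r).Walk a a), c.IsCycle →
        (⟨(0, r, 0), by simp⟩ : TriVert r) ∈ c.support →
        (⟨(0, 0, r), by simp⟩ : TriVert r) ∈ c.support →
        2 * r + 1 ≤ c.length) ∧
      (∃ (a : TriVert r) (c : (triGrid r).Walk a a), c.IsCycle ∧
        (⟨(0, r, 0), by simp⟩ : TriVert r) ∈ c.support ∧
        (⟨(0, 0, r), by simp⟩ : TriVert r) ∈ c.support ∧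
        c.length = 2 * r + 1) := by
  have hu0 : (0 : ℕ) + r + 0 = r := by omega
  have hv0 : (0 : ℕ) + 0 + r = r := by omega
  set u : TriVert r := mkV r 0 r 0 hu0 with hu_def
  set v : TriVert r := mkV r 0 0 r hv0 with hv_def
  constructor
  · -- lower bound
    intro a c hc hu hv
    have hu' : u ∈ c.support := hu
    have hv' : v ∈ c.support := hv
    have hnn : ¬ c.Nil := by
      intro hnil
      have h3 := hc.three_le_length
      rw [Walk.nil_iff_length_eq] at hnil
      omega
    set c' := c.rotate u hu' with hc'_def
    have hcyc' : c'.IsCycle := hc.rotate hu'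
    have hlen' : c'.length = c.length := by
      have h1 := congrArg Walk.length (c.take_spec hu')
      rw [Walk.length_append] at h1
      rw [hc'_def, Walk.rotate, Walk.length_append]
      omega
    have hvmem : v ∈ c'.support := by
      have h1 : v ∈ c.support.tail := mem_tail_of_closed c hnn hv'
      have h2 := Walk.support_rotate c u hu'
      have h3 : v ∈ c'.support.tail := (h2.mem_iff).mpr h1
      exact List.mem_of_mem_tail h3
    set p := c'.takeUntil v hvmem with hp_def
    set q := c'.dropUntil v hvmem with hq_def
    have hsum : p.length + q.length = c'.length := by
      have h0 := congrArg Walk.length (c'.take_spec hvmem)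
      rw [Walk.length_append] at h0
      rw [← hp_def, ← hq_def] at h0
      omega
    have hp_lb : r ≤ p.length := by
      have := len_lb p
      simp only [hu_def, hv_def, mkV_j] at this
      omega
    have hq_lb : r ≤ q.length := by
      have := len_lb q
      simp only [hu_def, hv_def, mkV_j] at this
      omega
    by_contra hcon
    push_neg at hcon
    have hp_len : p.length = r := by omega
    have hq_len : q.length = r := by omega
    set m : TriVert r := mkV r 0 (r-1) 1 (by omega) with hm_def
    have hm_p : m ∈ p.support := mem_mid hr p hp_len
    have hm_q : m ∈ q.support := by
      have h1 : m ∈ q.reverse.support := mem_mid hr q.reverse (by simp [hq_len])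
      rwa [Walk.support_reverse, List.mem_reverse] at h1
    have hmu : m ≠ u := by
      intro h
      have : r - 1 = r := congrArg (fun x : TriVert r => x.1.2.1) h
      omega
    have hmv : m ≠ v := by
      intro h
      have : r - 1 = 0 := congrArg (fun x : TriVert r => x.1.2.1) h
      omega
    have hm_pt : m ∈ p.support.tail := by
      rw [p.support_eq_cons, List.mem_cons] at hm_p
      exact hm_p.resolve_left hmu
    have hm_qt : m ∈ q.support.tail := by
      rw [q.support_eq_cons, List.mem_cons] at hm_q
      exact hm_q.resolve_left hmv
    have hnd : (p.support.tail ++ q.support.tail).Nodup := by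
      have h1 := hcyc'.support_nodup
      have h2 : (p.append q).support.tail = p.support.tail ++ q.support.tail :=
        Walk.tail_support_append p q
      rw [hp_def, hq_def, c'.take_spec hvmem] at h2
      rwa [← h2]
    exact (List.disjoint_of_nodup_append hnd) hm_pt hm_qt
  · -- existence
    have h1r : 1 ≤ r := by omega
    have hd : r - 1 ≤ r - 1 := le_refl _
    have hadj0 : (triGrid r).Adj u (mkV r 0 (r-1) (r - (r-1)) (by omega)) := by
      rw [adj_iff']; simp only [hu_def, mkV_i, mkV_j, mkV_k]; omega
    have hadj1 : (triGrid r).Adj (mkV r 0 0 r hv0) (mkV r 1 (r - 1 - (r-1)) (r-1) (by omega)) := by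
      rw [adj_iff']; simp only [mkV_i, mkV_j, mkV_k]; omega
    set B := back r (r-1) hd h1r with hB_def
    set S := spine r (r-1) (by omega) with hS_def
    set P : (triGrid r).Walk (mkV r 0 (r-1) (r - (r-1)) (by omega)) u :=
      S.append (Walk.cons hadj1 B) with hP_def
    set c : (triGrid r).Walk u u := Walk.cons hadj0 P with hc_def
    have hPsupp : P.support = S.support ++ B.support := by
      rw [hP_def, Walk.support_append, Walk.support_cons, List.tail_cons]
    have hcyc : c.IsCycle := by
      rw [hc_def, Walk.cons_isCycle_iff]
      constructor
      · -- P is a path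
        rw [Walk.isPath_def, hPsupp]
        refine List.Nodup.append (spine_nodup _ _) (back_nodup _ _ _) ?_
        intro x hx1 hx2
        obtain ⟨hxi, hxj⟩ := spine_support _ _ x hx1
        rcases back_support _ _ _ x hx2 with ⟨hbi, _⟩ | hbu
        · omega
        · have : x.1.2.1 = r := by rw [hbu]; simp
          omega
      · -- the closing edge is not in P
        intro hmem
        rw [hP_def, Walk.edges_append, Walk.edges_cons, List.mem_append, List.mem_cons] at hmem
        rcases hmem with hS | hE | hB'
        · have : u ∈ S.support := S.fst_mem_support_of_mem_edges hS
          have := (spine_support _ _ u this).2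
          simp only [hu_def, mkV_j] at this
          omega
        · rw [Sym2.eq_iff] at hE
          rcases hE with ⟨h1, _⟩ | ⟨h1, _⟩
          · have : r = 0 := by
              have := congrArg (fun x : TriVert r => x.1.2.1) h1
              simpa [hu_def] using this
            omega
          · have : (0 : ℕ) = 1 := by
              have := congrArg (fun x : TriVert r => x.1.1) h1
              simpa [hu_def] using this
            omega
        · have hw : (mkV r 0 (r-1) (r - (r-1)) (by omega) : TriVert r) ∈ B.support := by
            apply B.fst_mem_support_of_mem_edges
            rwa [Sym2.eq_swap]
          rcases back_support _ _ _ _ hw with ⟨hbi, _⟩ | hbu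
          · simp at hbi
          · have := congrArg (fun x : TriVert r => x.1.2.1) hbu
            simp at this
            omega
    refine ⟨u, c, hcyc, ?_, ?_, ?_⟩
    · exact c.start_mem_support
    · show v ∈ c.support
      rw [hc_def, Walk.support_cons]
      refine List.mem_cons_of_mem _ ?_
      rw [hPsupp, List.mem_append]
      left
      exact S.end_mem_support
    · rw [hc_def, Walk.length_cons, hP_def, Walk.length_append, Walk.length_cons,
        spine_length, back_length]
      omega
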